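/- Let α₁ < α₂ < ⋯ < α_k be reals in (0,1), let c ∈ ℝ≥0ⁿ, and let S₀ = ∅, S₁, …, S_k ⊆ [n] be sets with strictly increasing costs c(S₀) < c(S₁) < ⋯ < c(S_k). Then there exist values f(S₀)=0 < f(S₁) < ⋯ < f(S_k) such that for each i ∈ [k], α_i = (c(S_i) - c(S_{i-1}))/(f(S_i) - f(S_{i-1})); moreover for the monotone extension g(S) = max{f(S_i) : S_i ⊆ S}, each S_i is a best response at every α strictly between α_i and α_{i+1} (setting α_{k+1}=1), i.e. S_i maximizes α·g(S) - c(S). -/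
import Mathlib


/-- Realizing an arbitrary cost-increasing chain of bundles as successive best responses:
there exist values v (= f(Sᵢ)) with v 0 = 0, strictly increasing, hitting the prescribed
critical values αᵢ, such that under the monotone extension g each Sᵢ is a best response
on the interval (αᵢ, αᵢ₊₁). -/
theorem stmt19 (n k : ℕ) (hk : 1 ≤ k)
    (α : ℕ → ℝ) (hα0 : α 0 = 0) (hαtop : α (k + 1) = 1)
    (hαpos : ∀ i, 1 ≤ i → i ≤ k → 0 < α i ∧ α i < 1)
    (hαmono : ∀ i j, 1 ≤ i → i < j → j ≤ k → α i < α j)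
    (c : Fin n → ℝ) (hc : ∀ i, 0 ≤ c i)
    (S : ℕ → Finset (Fin n)) (hS0 : S 0 = ∅)
    (hcost : ∀ i < k, ∑ j ∈ S i, c j < ∑ j ∈ S (i + 1), c j) :
    ∃ v : ℕ → ℝ, v 0 = 0 ∧ (∀ i < k, v i < v (i + 1)) ∧
      (∀ i, 1 ≤ i → i ≤ k →
        α i = ((∑ j ∈ S i, c j) - (∑ j ∈ S (i - 1), c j)) / (v i - v (i - 1))) ∧
      (∀ i ≤ k, ∀ β : ℝ, α i < β → β < α (i + 1) →
        ∀ T : Finset (Fin n),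
          β * sSup {x : ℝ | ∃ m ≤ k, S m ⊆ T ∧ v m = x} - ∑ j ∈ T, c j ≤
          β * sSup {x : ℝ | ∃ m ≤ k, S m ⊆ S i ∧ v m = x} - ∑ j ∈ S i, c j) := by
  classical
  set C : ℕ → ℝ := fun m => ∑ j ∈ S m, c j with hCdef
  set v : ℕ → ℝ := fun i => ∑ m ∈ Finset.range i, (C (m + 1) - C m) / α (m + 1) with hvdef
  have hv0 : v 0 = 0 := by simp [hvdef]
  have hstep : ∀ i, v (i + 1) = v i + (C (i + 1) - C i) / α (i + 1) := by
    intro i; simp [hvdef, Finset.sum_range_succ]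
  have hd : ∀ i < k, 0 < (C (i + 1) - C i) / α (i + 1) := by
    intro i hi
    have h1 : 0 < C (i + 1) - C i := sub_pos.mpr (hcost i hi)
    have h2 : 0 < α (i + 1) := (hαpos (i + 1) (by omega) (by omega)).1
    positivity
  have hvmono : ∀ i < k, v i < v (i + 1) := by
    intro i hi; rw [hstep]; linarith [hd i hi]
  have hvle : ∀ b ≤ k, ∀ a ≤ b, v a ≤ v b := by
    intro b
    induction b with
    | zero => intro _ a ha; interval_cases a; exact le_refl _
    | succ b ih =>
      intro hb a ha
      rcases Nat.lt_or_ge a (b + 1) with h | h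
      · exact le_trans (ih (by omega) a (by omega)) (le_of_lt (hvmono b (by omega)))
      · have : a = b + 1 := by omega
        subst this; exact le_refl _
  have hClt : ∀ a b, a < b → b ≤ k → C a < C b := by
    intro a b
    induction b with
    | zero => omega
    | succ b ih =>
      intro hab hbk
      rcases Nat.lt_or_ge a b with h | h
      · exact lt_trans (ih h (by omega)) (hcost b (by omega))
      · have : a = b := by omega
        subst this; exact hcost a (by omega)
  refine ⟨v, hv0, hvmono, ?_, ?_⟩
  · intro i h1 h2
    obtain ⟨j, rfl⟩ : ∃ j, i = j + 1 := ⟨i - 1, by omega⟩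
    simp only [Nat.add_sub_cancel]
    have hα : 0 < α (j + 1) := (hαpos (j + 1) (by omega) h2).1
    have hCd : 0 < C (j + 1) - C j := sub_pos.mpr (hcost j (by omega))
    show α (j + 1) = (C (j + 1) - C j) / (v (j + 1) - v j)
    rw [hstep]
    have h3 : v j + (C (j + 1) - C j) / α (j + 1) - v j = (C (j + 1) - C j) / α (j + 1) := by ring
    rw [h3, div_div_eq_mul_div, mul_comm, mul_div_assoc, div_self (ne_of_gt hCd), mul_one]
  · intro i hik β hβl hβr T
    -- key one-step inequalities
    have hup : ∀ m, m < i → β * v m - C m ≤ β * v (m + 1) - C (m + 1) := by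
      intro m hm
      have hmk : m < k := by omega
      have hα1 : α (m + 1) ≤ α i := by
        rcases eq_or_lt_of_le (show m + 1 ≤ i by omega) with h | h
        · rw [h]
        · exact le_of_lt (hαmono (m + 1) i (by omega) h hik)
      have hαβ : α (m + 1) < β := lt_of_le_of_lt hα1 hβl
      have hα : 0 < α (m + 1) := (hαpos (m + 1) (by omega) (by omega)).1
      have hd' := hd m hmk
      have hCd : C (m + 1) - C m = α (m + 1) * ((C (m + 1) - C m) / α (m + 1)) := by
        field_simp
      rw [hstep m]
      nlinarith [mul_lt_mul_of_pos_right hαβ hd']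
    have hdown : ∀ m, i ≤ m → m < k → β * v (m + 1) - C (m + 1) ≤ β * v m - C m := by
      intro m hm hmk
      have hα1 : α (i + 1) ≤ α (m + 1) := by
        rcases eq_or_lt_of_le (show i + 1 ≤ m + 1 by omega) with h | h
        · rw [h]
        · exact le_of_lt (hαmono (i + 1) (m + 1) (by omega) h (by omega))
      have hαβ : β < α (m + 1) := lt_of_lt_of_le hβr hα1
      have hα : 0 < α (m + 1) := (hαpos (m + 1) (by omega) (by omega)).1
      have hd' := hd m hmk
      have hCd : C (m + 1) - C m = α (m + 1) * ((C (m + 1) - C m) / α (m + 1)) := by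
        field_simp
      rw [hstep m]
      nlinarith [mul_lt_mul_of_pos_right hαβ hd']
    have hchain_up : ∀ j ≤ i, ∀ m ≤ j, β * v m - C m ≤ β * v j - C j := by
      intro j
      induction j with
      | zero => intro _ m hm; interval_cases m; exact le_refl _
      | succ j ih =>
        intro hj m hm
        rcases Nat.lt_or_ge m (j + 1) with h | h
        · exact le_trans (ih (by omega) m (by omega)) (hup j (by omega))
        · have : m = j + 1 := by omega
          subst this; exact le_refl _
    have hchain_down : ∀ j, i ≤ j → j ≤ k → β * v j - C j ≤ β * v i - C i := by
      intro j
      induction j with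
      | zero =>
        intro h1 _
        have hi0 : i = 0 := by omega
        rw [hi0]
      | succ j ih =>
        intro h1 h2
        rcases Nat.lt_or_ge i (j + 1) with h | h
        · exact le_trans (hdown j (by omega) (by omega)) (ih (by omega) (by omega))
        · have : i = j + 1 := by omega
          subst this; exact le_refl _
    have hkey : ∀ m ≤ k, β * v m - C m ≤ β * v i - C i := by
      intro m hm
      rcases le_or_gt m i with h | h
      · exact hchain_up i (le_refl _) m h
      · exact hchain_down m (le_of_lt h) hm
    -- sSup over S i equals v i
    have hSupSi : sSup {x : ℝ | ∃ m ≤ k, S m ⊆ S i ∧ v m = x} = v i := by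
      have hmemi : v i ∈ {x : ℝ | ∃ m ≤ k, S m ⊆ S i ∧ v m = x} :=
        ⟨i, hik, Finset.Subset.refl _, rfl⟩
      have hub : ∀ x ∈ {x : ℝ | ∃ m ≤ k, S m ⊆ S i ∧ v m = x}, x ≤ v i := by
        rintro x ⟨m, hm, hsub, rfl⟩
        rcases le_or_gt m i with h | h
        · exact hvle i hik m h
        · exfalso
          have h1 : C m ≤ C i :=
            Finset.sum_le_sum_of_subset_of_nonneg hsub (fun j _ _ => hc j)
          have h2 : C i < C m := hClt i m h hm
          linarith
      exact le_antisymm (csSup_le ⟨_, hmemi⟩ hub) (le_csSup ⟨v i, hub⟩ hmemi)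
    -- sSup over T is attained
    have hBsub : {x : ℝ | ∃ m ≤ k, S m ⊆ T ∧ v m = x} ⊆ v '' Set.Iic k := by
      rintro x ⟨m, hm, _, rfl⟩; exact ⟨m, hm, rfl⟩
    have hBfin : {x : ℝ | ∃ m ≤ k, S m ⊆ T ∧ v m = x}.Finite :=
      ((Set.finite_Iic k).image v).subset hBsub
    have hBne : {x : ℝ | ∃ m ≤ k, S m ⊆ T ∧ v m = x}.Nonempty :=
      ⟨v 0, 0, by omega, by rw [hS0]; exact Finset.empty_subset T, rfl⟩
    obtain ⟨m, hm, hsub, hvm⟩ := hBne.csSup_mem hBfin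
    rw [hSupSi, ← hvm]
    have hCmT : C m ≤ ∑ j ∈ T, c j :=
      Finset.sum_le_sum_of_subset_of_nonneg hsub (fun j _ _ => hc j)
    have := hkey m hm
    simp only [hCdef] at this hCmT ⊢
    linarith
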